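/- Let A and B be abelian categories with enough projective objects and let F : A → B be a right exact functor which restricts to an equivalence between the full subcategories of projective objects of A and of B. Then F is an equivalence of abelian categories. -/

import Mathlib

open CategoryTheory Limits

universe v₁ v₂ u₁ u₂

section Aux

variable {C : Type u₁} [Category.{v₁} C] [Abelian C] [EnoughProjectives C]

/-- The beginning of a projective presentation of `X`, as a short complex
`P₁ ⟶ P₀ ⟶ X`. -/
noncomputable abbrev presCx (X : C) : ShortComplex C :=
  ShortComplex.mk (Projective.π (kernel (Projective.π X)) ≫ kernel.ι (Projective.π X))
    (Projective.π X) (by simp)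

instance presCx_proj₁ (X : C) : Projective (presCx X).X₁ := by
  dsimp [presCx]; infer_instance

instance presCx_proj₂ (X : C) : Projective (presCx X).X₂ := by
  dsimp [presCx]; infer_instance

instance presCx_epi_g (X : C) : Epi (presCx X).g := by
  dsimp [presCx]; infer_instance

lemma presCx_exact (X : C) : (presCx X).Exact := by
  rw [ShortComplex.exact_iff_epi_kernel_lift]
  have h : kernel.lift (presCx X).g (presCx X).f (presCx X).zero =
      Projective.π (kernel (Projective.π X)) := by
    rw [← cancel_mono (kernel.ι (presCx X).g)]
    simp [presCx]
  rw [h]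
  exact Projective.π_epi _

end Aux

/-- A right exact functor between abelian categories with enough projectives which restricts
to an equivalence between the full subcategories of projective objects is an equivalence. -/
theorem stmt5 {A : Type u₁} {B : Type u₂} [Category.{v₁} A] [Category.{v₂} B]
    [Abelian A] [Abelian B] [EnoughProjectives A] [EnoughProjectives B]
    (F : A ⥤ B) [F.Additive] [PreservesFiniteColimits F]
    (hproj : ∀ X : A, Projective X → Projective (F.obj X))
    (hff : ∀ (X Y : A), Projective X → Projective Y →
      Function.Bijective (fun f : X ⟶ Y => F.map f))
    (hess : ∀ Y : B, Projective Y → ∃ X : A, Projective X ∧ Nonempty (F.obj X ≅ Y)) :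
    F.IsEquivalence := by
  -- F preserves epimorphisms since it preserves finite colimits
  haveI : F.PreservesEpimorphisms := inferInstance
  -- Faithfulness
  have hfaith : ∀ {X Y : A} (f : X ⟶ Y), F.map f = 0 → f = 0 := by
    -- first treat the case of a projective source
    have h : ∀ (P : A) (Y : A) (g : P ⟶ Y), Projective P → F.map g = 0 → g = 0 := by
      intro P Y g hP hg
      haveI := hP
      set S := presCx Y with hSdef
      have hS : S.Exact := presCx_exact Y
      have hS' : (S.map F).Exact :=
        hS.map_of_epi_of_preservesCokernel F inferInstance inferInstance
      -- factor g through S.g using projectivity of P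
      let g₀ : P ⟶ S.X₂ := Projective.factorThru g S.g
      have hg₀fac : g₀ ≫ S.g = g := Projective.factorThru_comp g S.g
      haveI : Projective (F.obj P) := hproj P hP
      have hzero : F.map g₀ ≫ (S.map F).g = 0 := by
        show F.map g₀ ≫ F.map S.g = 0
        rw [← F.map_comp, hg₀fac, hg]
      let l : F.obj P ⟶ (S.map F).X₁ := hS'.liftFromProjective (F.map g₀) hzero
      have hl : l ≫ (S.map F).f = F.map g₀ :=
        hS'.liftFromProjective_comp (F.map g₀) hzero
      obtain ⟨m, hm⟩ := (hff P S.X₁ hP inferInstance).2 l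
      replace hm : F.map m = l := hm
      have hmf : m ≫ S.f = g₀ := by
        apply (hff P S.X₂ hP inferInstance).1
        show F.map (m ≫ S.f) = F.map g₀
        rw [F.map_comp, hm]
        exact hl
      rw [← hg₀fac, ← hmf, Category.assoc, S.zero, comp_zero]
    intro X Y f hf
    have h2 := h (Projective.over X) Y (Projective.π X ≫ f) inferInstance
      (by rw [F.map_comp, hf, comp_zero])
    rwa [← cancel_epi (Projective.π X), comp_zero]
  -- Fullness
  have hfull : ∀ {X Y : A} (f' : F.obj X ⟶ F.obj Y), ∃ f : X ⟶ Y, F.map f = f' := by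
    intro X Y f'
    set S := presCx X with hSdef
    set T := presCx Y with hTdef
    have hS : S.Exact := presCx_exact X
    haveI : Projective (F.obj S.X₂) := hproj _ inferInstance
    haveI : Epi (F.map T.g) := F.map_epi _
    let a : F.obj S.X₂ ⟶ F.obj Y := F.map S.g ≫ f'
    let g₀' : F.obj S.X₂ ⟶ F.obj T.X₂ := Projective.factorThru a (F.map T.g)
    have hg₀'fac : g₀' ≫ F.map T.g = a := Projective.factorThru_comp a (F.map T.g)
    obtain ⟨g₀, hg₀⟩ := (hff S.X₂ T.X₂ inferInstance inferInstance).2 g₀'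
    replace hg₀ : F.map g₀ = g₀' := hg₀
    have key : S.f ≫ (g₀ ≫ T.g) = 0 := by
      apply hfaith
      rw [F.map_comp S.f, F.map_comp g₀ T.g, hg₀]
      show F.map S.f ≫ g₀' ≫ F.map T.g = 0
      rw [hg₀'fac]
      show F.map S.f ≫ F.map S.g ≫ f' = 0
      rw [← Category.assoc, ← F.map_comp, S.zero, F.map_zero, zero_comp]
    refine ⟨hS.desc (g₀ ≫ T.g) key, ?_⟩
    have hdesc : S.g ≫ hS.desc (g₀ ≫ T.g) key = g₀ ≫ T.g := hS.g_desc _ _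
    haveI : Epi (F.map S.g) := F.map_epi _
    rw [← cancel_epi (F.map S.g), ← F.map_comp, hdesc, F.map_comp, hg₀]
    show g₀' ≫ F.map T.g = F.map S.g ≫ f'
    exact hg₀'fac
  -- Essential surjectivity
  have hes : ∀ Y : B, ∃ X : A, Nonempty (F.obj X ≅ Y) := by
    intro Y
    set T := presCx Y with hTdef
    have hT : T.Exact := presCx_exact Y
    obtain ⟨P₀, hP₀, ⟨e₀⟩⟩ := hess T.X₂ inferInstance
    obtain ⟨P₁, hP₁, ⟨e₁⟩⟩ := hess T.X₁ inferInstance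
    obtain ⟨s, hs⟩ := (hff P₁ P₀ hP₁ hP₀).2 (e₁.hom ≫ T.f ≫ e₀.inv)
    refine ⟨cokernel s, ⟨?_⟩⟩
    calc F.obj (cokernel s) ≅ cokernel (F.map s) := PreservesCokernel.iso F s
      _ ≅ cokernel (e₁.hom ≫ T.f ≫ e₀.inv) := cokernelIsoOfEq hs
      _ ≅ cokernel (T.f ≫ e₀.inv) := cokernelEpiComp _ _
      _ ≅ cokernel T.f := cokernelCompIsIso _ _
      _ ≅ Y := IsColimit.coconePointUniqueUpToIso (cokernelIsCokernel T.f) hT.gIsCokernel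
  haveI : F.Faithful :=
    ⟨fun {X Y f g} h => sub_eq_zero.mp (hfaith (f - g) (by rw [F.map_sub, h, sub_self]))⟩
  haveI : F.Full := ⟨fun f => hfull f⟩
  haveI : F.EssSurj := ⟨fun Y => by
    obtain ⟨X, ⟨e⟩⟩ := hes Y
    exact ⟨X, ⟨e⟩⟩⟩
  exact ⟨inferInstance, inferInstance, inferInstance⟩
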